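/- There is an absolute constant C such that: if N ≥ 1, B ≥ 0, Δ > 0, D ≥ 1, and f : [N, 2N] → ℝ is differentiable with |f(x)| ≤ B and f′(x) ≥ Δ for all x ∈ [N, 2N], then Σ_{N < n ≤ 2N} min( D, 1/‖f(n)‖ ) ≤ C (B + 1)(D + 1/Δ) log(2 + 1/Δ), where n runs over integers. -/

import Mathlib

lemma sum_Icc_inv_le (J : ℕ) : ∑ j ∈ Finset.Icc 1 J, (1:ℝ)/j ≤ 1 + Real.log J := by
  induction J with
  | zero => simp
  | succ J ih =>
    rw [Finset.sum_Icc_succ_top (by omega)]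
    rcases Nat.eq_zero_or_pos J with rfl | hJ
    · simp
    · have hJ0 : (0:ℝ) < J := by exact_mod_cast hJ
      have h1 : Real.log ((J:ℝ)/(J+1)) ≤ (J:ℝ)/(J+1) - 1 :=
        Real.log_le_sub_one_of_pos (by positivity)
      have h2 : Real.log ((J:ℝ)/(J+1)) = Real.log J - Real.log (J+1) :=
        Real.log_div (by positivity) (by positivity)
      have h3 : (J:ℝ)/(J+1) - 1 = -(1/(J+1)) := by field_simp; ring
      have h4 : (1:ℝ)/(J+1) ≤ Real.log (J+1) - Real.log J := by
        rw [h2, h3] at h1; linarith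
      push_cast
      push_cast at ih
      linarith

lemma side_sum {Δ : ℝ} (hΔ : 0 < Δ) {s : Finset ℕ} {d : ℕ → ℕ}
    (hinj : ∀ p ∈ s, ∀ q ∈ s, d p = d q → p = q)
    (hd1 : ∀ n ∈ s, 1 ≤ d n) (hdJ : ∀ n ∈ s, (d n : ℝ) ≤ 1/Δ) :
    ∑ n ∈ s, (1:ℝ) / (d n : ℝ) ≤ 1 + Real.log (2 + 1/Δ) := by
  classical
  have hΔi : (0:ℝ) ≤ 1/Δ := by positivity
  have h1 : ∑ n ∈ s, (1:ℝ)/(d n) = ∑ j ∈ s.image d, (1:ℝ)/j :=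
    (Finset.sum_image (f := fun j : ℕ => (1:ℝ)/(j:ℝ)) hinj).symm
  set J := ⌊1/Δ⌋₊ with hJdef
  have hsub : s.image d ⊆ Finset.Icc 1 J := by
    intro j hj
    obtain ⟨n, hn, rfl⟩ := Finset.mem_image.mp hj
    exact Finset.mem_Icc.mpr ⟨hd1 n hn, Nat.le_floor (hdJ n hn)⟩
  have h2 : ∑ j ∈ s.image d, (1:ℝ)/j ≤ ∑ j ∈ Finset.Icc 1 J, (1:ℝ)/j :=
    Finset.sum_le_sum_of_subset_of_nonneg hsub (fun j _ _ => by positivity)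
  have h3 : Real.log J ≤ Real.log (2 + 1/Δ) := by
    rcases Nat.eq_zero_or_pos J with h | h
    · rw [h]; simp only [Nat.cast_zero, Real.log_zero]
      exact Real.log_nonneg (by linarith)
    · refine Real.log_le_log (by exact_mod_cast h) ?_
      have : (J:ℝ) ≤ 1/Δ := Nat.floor_le hΔi
      linarith
  have h4 := sum_Icc_inv_le J
  rw [h1]
  linarith

lemma fiber_bound {Δ D : ℝ} (hΔ : 0 < Δ) (hD : 1 ≤ D)
    (S : Finset ℕ) (u : ℕ → ℝ)
    (hu0 : ∀ n ∈ S, 0 ≤ u n) (hu2 : ∀ n ∈ S, u n ≤ 1/2)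
    (hgap : ∀ p ∈ S, ∀ q ∈ S, Δ * |(p:ℝ) - (q:ℝ)| ≤ u p + u q) :
    ∑ n ∈ S, (if u n = 0 then D else min D (1 / u n)) ≤
      D + (4/Δ) * (1 + Real.log (2 + 1/Δ)) := by
  classical
  have hΔi : (0:ℝ) < 1/Δ := by positivity
  have hL0 : 0 ≤ Real.log (2 + 1/Δ) := Real.log_nonneg (by linarith)
  have hD0 : (0:ℝ) < D := by linarith
  rcases S.eq_empty_or_nonempty with rfl | hS
  · simp only [Finset.sum_empty]; positivity
  obtain ⟨a, haS, hmin⟩ := S.exists_min_image u hS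
  have key : ∀ n ∈ S, Δ * |(n:ℝ) - (a:ℝ)| ≤ 2 * u n := by
    intro n hn
    have h1 := hgap n hn a haS
    have h2 := hmin n hn
    linarith
  have hpos : ∀ n ∈ S, n ≠ a → 0 < u n := by
    intro n hn hna
    rcases (hu0 n hn).lt_or_eq with h | h
    · exact h
    · exfalso
      have h1 := key n hn
      have h2 : |(n:ℝ) - (a:ℝ)| = 0 := by
        have := abs_nonneg ((n:ℝ) - (a:ℝ))
        nlinarith
      have : (n:ℝ) = (a:ℝ) := by
        have := abs_eq_zero.mp h2; linarith
      exact hna (by exact_mod_cast this)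
  -- term bound off the minimum
  have hterm : ∀ n ∈ S, n ≠ a →
      (if u n = 0 then D else min D (1 / u n)) ≤ (2/Δ) * (1 / |(n:ℝ) - (a:ℝ)|) := by
    intro n hn hna
    have hu := hpos n hn hna
    rw [if_neg (ne_of_gt hu)]
    have hd0 : (0:ℝ) < |(n:ℝ) - (a:ℝ)| := by
      rw [abs_pos, sub_ne_zero]
      exact_mod_cast hna
    have h1 := key n hn
    have h2 : min D (1/u n) ≤ 1/u n := min_le_right _ _
    have h3 : 1/u n ≤ 2/(Δ * |(n:ℝ) - (a:ℝ)|) := by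
      rw [div_le_div_iff₀ hu (by positivity)]
      nlinarith
    calc min D (1/u n) ≤ 2/(Δ * |(n:ℝ) - (a:ℝ)|) := le_trans h2 h3
      _ = (2/Δ) * (1 / |(n:ℝ) - (a:ℝ)|) := by field_simp
  have htermD : ∀ n ∈ S, (if u n = 0 then D else min D (1 / u n)) ≤ D := by
    intro n hn
    split
    · exact le_rfl
    · exact min_le_left _ _
  set T : ℕ → ℝ := fun n => if u n = 0 then D else min D (1 / u n) with hT
  set L := Real.log (2 + 1/Δ) with hLdef
  set s1 := (S.erase a).filter (fun n => a < n) with hs1def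
  set s2 := (S.erase a).filter (fun n => ¬ a < n) with hs2def
  have hmem1 : ∀ n ∈ s1, n ∈ S ∧ n ≠ a ∧ a < n := by
    intro n hn
    rw [hs1def, Finset.mem_filter, Finset.mem_erase] at hn
    exact ⟨hn.1.2, hn.1.1, hn.2⟩
  have hmem2 : ∀ n ∈ s2, n ∈ S ∧ n ≠ a ∧ n < a := by
    intro n hn
    rw [hs2def, Finset.mem_filter, Finset.mem_erase] at hn
    exact ⟨hn.1.2, hn.1.1, by omega⟩
  have hcast1 : ∀ n ∈ s1, ((n - a : ℕ):ℝ) = |(n:ℝ) - (a:ℝ)| := by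
    intro n hn
    obtain ⟨_, _, hlt⟩ := hmem1 n hn
    rw [Nat.cast_sub (le_of_lt hlt), abs_of_nonneg]
    have : (a:ℝ) ≤ n := by exact_mod_cast le_of_lt hlt
    linarith
  have hcast2 : ∀ n ∈ s2, ((a - n : ℕ):ℝ) = |(n:ℝ) - (a:ℝ)| := by
    intro n hn
    obtain ⟨_, _, hlt⟩ := hmem2 n hn
    rw [Nat.cast_sub (le_of_lt hlt), abs_of_nonpos]
    · ring
    have : (n:ℝ) ≤ a := by exact_mod_cast le_of_lt hlt
    linarith
  have hdJgen : ∀ n ∈ S, n ≠ a → |(n:ℝ) - (a:ℝ)| ≤ 1/Δ := by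
    intro n hn hna
    have h1 := key n hn
    have h2 := hu2 n hn
    rw [le_div_iff₀ hΔ]
    nlinarith
  have hside1 : ∑ n ∈ s1, T n ≤ (2/Δ) * (1 + L) := by
    have hb : ∀ n ∈ s1, T n ≤ (2/Δ) * (1 / ((n - a : ℕ):ℝ)) := by
      intro n hn
      obtain ⟨hnS, hna, _⟩ := hmem1 n hn
      rw [hcast1 n hn]
      exact hterm n hnS hna
    calc ∑ n ∈ s1, T n ≤ ∑ n ∈ s1, (2/Δ) * (1 / ((n - a : ℕ):ℝ)) :=
          Finset.sum_le_sum hb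
      _ = (2/Δ) * ∑ n ∈ s1, (1 / ((n - a : ℕ):ℝ)) := by rw [Finset.mul_sum]
      _ ≤ (2/Δ) * (1 + L) := by
          refine mul_le_mul_of_nonneg_left ?_ (by positivity)
          refine side_sum hΔ (d := fun n => n - a) ?_ ?_ ?_
          · intro p hp q hq hpq
            have h1 := (hmem1 p hp).2.2
            have h2 := (hmem1 q hq).2.2
            change p - a = q - a at hpq
            omega
          · intro n hn
            have := (hmem1 n hn).2.2
            show 1 ≤ n - a
            omega
          · intro n hn
            obtain ⟨hnS, hna, _⟩ := hmem1 n hn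
            rw [hcast1 n hn]
            exact hdJgen n hnS hna
  have hside2 : ∑ n ∈ s2, T n ≤ (2/Δ) * (1 + L) := by
    have hb : ∀ n ∈ s2, T n ≤ (2/Δ) * (1 / ((a - n : ℕ):ℝ)) := by
      intro n hn
      obtain ⟨hnS, hna, _⟩ := hmem2 n hn
      rw [hcast2 n hn]
      exact hterm n hnS hna
    calc ∑ n ∈ s2, T n ≤ ∑ n ∈ s2, (2/Δ) * (1 / ((a - n : ℕ):ℝ)) :=
          Finset.sum_le_sum hb
      _ = (2/Δ) * ∑ n ∈ s2, (1 / ((a - n : ℕ):ℝ)) := by rw [Finset.mul_sum]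
      _ ≤ (2/Δ) * (1 + L) := by
          refine mul_le_mul_of_nonneg_left ?_ (by positivity)
          refine side_sum hΔ (d := fun n => a - n) ?_ ?_ ?_
          · intro p hp q hq hpq
            have h1 := (hmem2 p hp).2.2
            have h2 := (hmem2 q hq).2.2
            change a - p = a - q at hpq
            omega
          · intro n hn
            have := (hmem2 n hn).2.2
            show 1 ≤ a - n
            omega
          · intro n hn
            obtain ⟨hnS, hna, _⟩ := hmem2 n hn
            rw [hcast2 n hn]
            exact hdJgen n hnS hna
  have hsplit : ∑ n ∈ S.erase a, T n = ∑ n ∈ s1, T n + ∑ n ∈ s2, T n :=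
    (Finset.sum_filter_add_sum_filter_not _ _ _).symm
  have htotal : ∑ n ∈ S, T n = T a + ∑ n ∈ S.erase a, T n :=
    (Finset.add_sum_erase _ _ haS).symm
  have hTa : T a ≤ D := htermD a haS
  rw [htotal, hsplit]
  have hring : (2/Δ)*(1+L) + (2/Δ)*(1+L) = (4/Δ)*(1+L) := by ring
  linarith

/-- `‖θ‖`, the distance from `θ` to the nearest integer. -/
noncomputable def distNearestInt (θ : ℝ) : ℝ := |θ - round θ|

set_option maxHeartbeats 1000000 in
theorem jia_min_sum_bound :
    ∃ C > (0 : ℝ), ∀ (N B Δ D : ℝ) (f f' : ℝ → ℝ),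
      1 ≤ N → 0 ≤ B → 0 < Δ → 1 ≤ D →
      (∀ x ∈ Set.Icc N (2 * N), HasDerivAt f (f' x) x) →
      (∀ x ∈ Set.Icc N (2 * N), |f x| ≤ B) →
      (∀ x ∈ Set.Icc N (2 * N), Δ ≤ f' x) →
      (∑ n ∈ Finset.Ioc ⌊N⌋₊ ⌊2 * N⌋₊,
          (if distNearestInt (f n) = 0 then D else min D (1 / distNearestInt (f n)))) ≤
        C * (B + 1) * (D + 1 / Δ) * Real.log (2 + 1 / Δ) := by
  classical
  refine ⟨100, by norm_num, ?_⟩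
  intro N B Δ D f f' hN hB hΔ hD hderiv hbound hslope
  set L := Real.log (2 + 1/Δ) with hLdef
  have hΔi : (0:ℝ) < 1/Δ := by positivity
  have hL0 : 0 ≤ L := Real.log_nonneg (by linarith)
  have hL2 : Real.log 2 ≤ L := Real.log_le_log (by norm_num) (by linarith)
  have hLhalf : (1:ℝ) ≤ 2 * L := by
    have := Real.log_two_gt_d9
    linarith
  set I := Finset.Ioc ⌊N⌋₊ ⌊2*N⌋₊ with hIdef
  set T : ℕ → ℝ := fun n =>
    if distNearestInt (f n) = 0 then D else min D (1 / distNearestInt (f n)) with hTdef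
  -- membership
  have hmem : ∀ n ∈ I, (n:ℝ) ∈ Set.Icc N (2*N) := by
    intro n hn
    rw [hIdef, Finset.mem_Ioc] at hn
    constructor
    · have h1 : N < ⌊N⌋₊ + 1 := Nat.lt_floor_add_one N
      have h2 : (⌊N⌋₊:ℝ) + 1 ≤ n := by exact_mod_cast hn.1
      linarith
    · calc (n:ℝ) ≤ ⌊2*N⌋₊ := by exact_mod_cast hn.2
        _ ≤ 2*N := Nat.floor_le (by linarith)
  -- mean value theorem consequence
  have hmvt : ∀ a b : ℝ, a ∈ Set.Icc N (2*N) → b ∈ Set.Icc N (2*N) → a < b →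
      Δ * (b - a) ≤ f b - f a := by
    intro a b ha hb hab
    have hsub : Set.Icc a b ⊆ Set.Icc N (2*N) := Set.Icc_subset_Icc ha.1 hb.2
    have hcont : ContinuousOn f (Set.Icc a b) := fun x hx =>
      ((hderiv x (hsub hx)).continuousAt).continuousWithinAt
    have hd : ∀ x ∈ Set.Ioo a b, HasDerivAt f (f' x) x := fun x hx =>
      hderiv x (hsub ⟨hx.1.le, hx.2.le⟩)
    obtain ⟨c, hc, hcs⟩ := exists_hasDerivAt_eq_slope f f' hab hcont hd
    have h1 : Δ ≤ f' c := hslope c (hsub ⟨hc.1.le, hc.2.le⟩)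
    rw [hcs] at h1
    have hba : 0 < b - a := by linarith
    calc Δ * (b - a) ≤ ((f b - f a)/(b - a)) * (b - a) :=
          mul_le_mul_of_nonneg_right h1 (le_of_lt hba)
      _ = f b - f a := div_mul_cancel₀ _ (ne_of_gt hba)
  set t := I.image (fun n : ℕ => round (f n)) with htdef
  have hfib : ∑ m ∈ t, ∑ n ∈ I.filter (fun n : ℕ => round (f n) = m), T n = ∑ n ∈ I, T n :=
    Finset.sum_fiberwise_of_maps_to (fun x hx => Finset.mem_image_of_mem _ hx) T
  -- per-fiber bound
  have hfb : ∀ m ∈ t, ∑ n ∈ I.filter (fun n : ℕ => round (f n) = m), T n ≤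
      D + (4/Δ) * (1 + L) := by
    intro m hm
    set S := I.filter (fun n : ℕ => round (f n) = m) with hSdef
    have hround : ∀ n ∈ S, round (f n) = m := fun n hn => (Finset.mem_filter.mp hn).2
    have hSI : ∀ n ∈ S, n ∈ I := fun n hn => (Finset.mem_filter.mp hn).1
    set u : ℕ → ℝ := fun n => |f n - (m:ℝ)| with hudef
    have hTu : ∀ n ∈ S, T n = (if u n = 0 then D else min D (1/u n)) := by
      intro n hn
      have hdn : distNearestInt (f n) = u n := by
        rw [hudef]
        unfold distNearestInt
        rw [hround n hn]
      rw [hTdef]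
      simp only [hdn]
    rw [Finset.sum_congr rfl hTu]
    refine fiber_bound hΔ hD S u ?_ ?_ ?_
    · intro n hn; exact abs_nonneg _
    · intro n hn
      have := abs_sub_round (f n)
      rw [hround n hn] at this
      exact this
    · intro p hp q hq
      rcases lt_trichotomy p q with h | h | h
      · have hcast : ((p:ℝ)) < (q:ℝ) := by exact_mod_cast h
        have h1 := hmvt p q (hmem p (hSI p hp)) (hmem q (hSI q hq)) hcast
        have h2 : |(p:ℝ) - (q:ℝ)| = (q:ℝ) - p := by
          rw [abs_of_nonpos (by linarith)]; ring
        have h3 : f q - f p ≤ u p + u q := by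
          rw [hudef]
          have := le_abs_self (f q - (m:ℝ))
          have := neg_abs_le (f p - (m:ℝ))
          simp only
          linarith
        rw [h2]; linarith
      · rw [h]
        simp only [sub_self, abs_zero, mul_zero, hudef]
        positivity
      · have hcast : ((q:ℝ)) < (p:ℝ) := by exact_mod_cast h
        have h1 := hmvt q p (hmem q (hSI q hq)) (hmem p (hSI p hp)) hcast
        have h2 : |(p:ℝ) - (q:ℝ)| = (p:ℝ) - q := by
          rw [abs_of_nonneg (by linarith)]
        have h3 : f p - f q ≤ u p + u q := by
          rw [hudef]
          have := le_abs_self (f p - (m:ℝ))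
          have := neg_abs_le (f q - (m:ℝ))
          simp only
          linarith
        rw [h2]; linarith
  -- number of fibers
  have htcard : (t.card : ℝ) ≤ 3 * (B + 1) := by
    have hfl1 : (1:ℤ) ≤ ⌊B+1⌋ := by
      rw [Int.le_floor]; push_cast; linarith
    have hsub : t ⊆ Finset.Icc (-⌊B+1⌋) ⌊B+1⌋ := by
      intro m hm
      obtain ⟨n, hn, rfl⟩ := Finset.mem_image.mp hm
      have hfn : |f n| ≤ B := hbound n (hmem n hn)
      have hrd := abs_sub_round (f n)
      have h1 : |(round (f n) : ℝ)| ≤ B + 1 := by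
        have : |(round (f n) : ℝ)| ≤ |f n| + |f n - round (f n)| := by
          have := abs_sub_abs_le_abs_sub (f n) ((round (f n) : ℝ))
          have := abs_abs ((round (f n)):ℝ)
          calc |(round (f n) : ℝ)| = |f n - (f n - round (f n))| := by ring_nf
            _ ≤ |f n| + |f n - round (f n)| := abs_sub _ _
        linarith
      rw [abs_le] at h1
      rw [Finset.mem_Icc]
      constructor
      · rw [neg_le, Int.le_floor]
        push_cast
        linarith [h1.1]
      · rw [Int.le_floor]
        exact h1.2
    have hcard1 : t.card ≤ (Finset.Icc (-⌊B+1⌋) ⌊B+1⌋).card := Finset.card_le_card hsub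
    have hcard2 : (Finset.Icc (-⌊B+1⌋) ⌊B+1⌋).card = (⌊B+1⌋ + 1 - -⌊B+1⌋).toNat :=
      Int.card_Icc _ _
    have hfl : (⌊B+1⌋ : ℝ) ≤ B + 1 := Int.floor_le _
    have h3 : ((⌊B+1⌋ + 1 - -⌊B+1⌋).toNat : ℝ) ≤ 3 * (B+1) := by
      have h0 : (0:ℤ) ≤ ⌊B+1⌋ + 1 - -⌊B+1⌋ := by omega
      have heq : ((⌊B+1⌋ + 1 - -⌊B+1⌋).toNat : ℝ) = 2*(⌊B+1⌋:ℝ) + 1 := by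
        rw [← Int.cast_natCast, Int.toNat_of_nonneg h0]
        push_cast
        ring
      rw [heq]
      linarith
    calc (t.card : ℝ) ≤ ((⌊B+1⌋ + 1 - -⌊B+1⌋).toNat : ℝ) := by
          rw [← hcard2]; exact_mod_cast hcard1
      _ ≤ 3 * (B+1) := h3
  -- assemble
  have hfinal : ∑ n ∈ I, T n ≤ 3 * (B+1) * (D + (4/Δ) * (1 + L)) := by
    rw [← hfib]
    calc ∑ m ∈ t, ∑ n ∈ I.filter (fun n : ℕ => round (f n) = m), T n
        ≤ ∑ m ∈ t, (D + (4/Δ) * (1 + L)) := Finset.sum_le_sum hfb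
      _ = (t.card : ℝ) * (D + (4/Δ) * (1 + L)) := by
          rw [Finset.sum_const, nsmul_eq_mul]
      _ ≤ 3 * (B+1) * (D + (4/Δ) * (1 + L)) := by
          refine mul_le_mul_of_nonneg_right htcard ?_
          positivity
  have hstep : D + (4/Δ) * (1 + L) ≤ (100/3) * (D + 1/Δ) * L := by
    have h4 : (4:ℝ)/Δ = 4 * (1/Δ) := by ring
    rw [h4]
    nlinarith [mul_nonneg (le_of_lt hΔi) hL0, mul_nonneg (by linarith : (0:ℝ) ≤ D) hL0,
      mul_nonneg (le_of_lt hΔi) (by linarith : (0:ℝ) ≤ 2*L - 1),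
      mul_nonneg (by linarith : (0:ℝ) ≤ D) (by linarith : (0:ℝ) ≤ 2*L - 1)]
  calc ∑ n ∈ I, T n ≤ 3 * (B+1) * (D + (4/Δ) * (1 + L)) := hfinal
    _ ≤ 3 * (B+1) * ((100/3) * (D + 1/Δ) * L) := by
        refine mul_le_mul_of_nonneg_left hstep ?_
        linarith
    _ = 100 * (B+1) * (D + 1/Δ) * L := by ring
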